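/- For every set X and every set-function F with domain X, the class W(X, F) is a set: there exists a set W such that for every set y, y ∈ W if and only if y belongs to W(X, F). -/

import Mathlib

/-- `f` is a set-function with domain `X`: a set of ordered pairs that is
functional and whose domain is exactly `X`. -/
def IsZFFun (f X : ZFSet) : Prop :=
  (∀ w ∈ f, ∃ u v : ZFSet, w = ZFSet.pair u v) ∧
  (∀ u v w : ZFSet, ZFSet.pair u v ∈ f → ZFSet.pair u w ∈ f → v = w) ∧
  (∀ u : ZFSet, (∃ v : ZFSet, ZFSet.pair u v ∈ f) ↔ u ∈ X)

/-- A class `W` is closed under the `W(X, F)`-clause: whenever `x ∈ X` and `f` is a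
set-function with domain `F(x)` all of whose values lie in `W`, then `⟨x, f⟩ ∈ W`.
(Here `F(x) = v` is expressed by `⟨x, v⟩ ∈ F`.) -/
def WClosed (X F : ZFSet) (W : ZFSet → Prop) : Prop :=
  ∀ x v f : ZFSet, x ∈ X → ZFSet.pair x v ∈ F → IsZFFun f v →
    (∀ u w : ZFSet, ZFSet.pair u w ∈ f → W w) → W (ZFSet.pair x f)

/-- The class `W(X, F)`: the smallest class closed under the `W(X, F)`-clause. -/
def WClass (X F : ZFSet) (y : ZFSet) : Prop :=
  ∀ W : ZFSet → Prop, WClosed X F W → W y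

universe u
open Classical

instance small_toSet' (x : ZFSet.{u}) : Small.{u} x.toSet := ZFSet.small_coe x

theorem ZFSet.mem_toSet (a x : ZFSet.{u}) : a ∈ x.toSet ↔ a ∈ x := Iff.rfl

/-- The value of a set-function at a point (junk value `∅` if undefined). -/
noncomputable def fval (F x : ZFSet.{u}) : ZFSet.{u} :=
  if h : ∃ v, ZFSet.pair x v ∈ F then h.choose else ∅

theorem fval_mem {F x v : ZFSet.{u}} (h : ZFSet.pair x v ∈ F) :
    ZFSet.pair x (fval F x) ∈ F := by
  have he : ∃ v, ZFSet.pair x v ∈ F := ⟨v, h⟩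
  rw [fval, dif_pos he]
  exact he.choose_spec

/-- The graph, as a `ZFSet`, of a function `Shrink v.toSet → ZFSet`. -/
noncomputable def graphZF (v : ZFSet.{u}) (h : Shrink v.toSet → ZFSet.{u}) : ZFSet.{u} :=
  ZFSet.range fun u => ZFSet.pair ((equivShrink v.toSet).symm u).1 (h u)

theorem mem_graphZF (v : ZFSet.{u}) (h : Shrink v.toSet → ZFSet.{u})
    (u : Shrink v.toSet) :
    ZFSet.pair ((equivShrink v.toSet).symm u).1 (h u) ∈ graphZF v h := by
  rw [graphZF, ZFSet.mem_range]; exact ⟨u, rfl⟩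

theorem graphZF_mem_elim {v : ZFSet.{u}} {h : Shrink v.toSet → ZFSet.{u}}
    {u w : ZFSet.{u}} (hm : ZFSet.pair u w ∈ graphZF v h) :
    ∃ u', ((equivShrink v.toSet).symm u').1 = u ∧ h u' = w := by
  rw [graphZF, ZFSet.mem_range] at hm
  obtain ⟨u', hu'⟩ := hm
  obtain ⟨h1, h2⟩ := ZFSet.pair_injective hu'
  exact ⟨u', h1, h2⟩

theorem graphZF_pair_mem {v : ZFSet.{u}} {h : Shrink v.toSet → ZFSet.{u}}
    {u : ZFSet.{u}} (hu : u ∈ v) :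
    ZFSet.pair u (h (equivShrink v.toSet ⟨u, (ZFSet.mem_toSet _ _).2 hu⟩))
      ∈ graphZF v h := by
  have := mem_graphZF v h (equivShrink v.toSet ⟨u, (ZFSet.mem_toSet _ _).2 hu⟩)
  rwa [Equiv.symm_apply_apply] at this

theorem graphZF_isZFFun (v : ZFSet.{u}) (h : Shrink v.toSet → ZFSet.{u}) :
    IsZFFun (graphZF v h) v := by
  refine ⟨?_, ?_, ?_⟩
  · intro w hw
    rw [graphZF, ZFSet.mem_range] at hw
    obtain ⟨u, rfl⟩ := hw
    exact ⟨_, _, rfl⟩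
  · intro u a b ha hb
    obtain ⟨u1, h1a, h1b⟩ := graphZF_mem_elim ha
    obtain ⟨u2, h2a, h2b⟩ := graphZF_mem_elim hb
    have : u1 = u2 :=
      (equivShrink v.toSet).symm.injective (Subtype.coe_injective (h1a.trans h2a.symm))
    rw [← h1b, ← h2b, this]
  · intro u
    constructor
    · rintro ⟨w, hw⟩
      obtain ⟨u1, h1a, -⟩ := graphZF_mem_elim hw
      rw [← h1a]
      exact (ZFSet.mem_toSet _ _).1 ((equivShrink v.toSet).symm u1).2
    · intro hu
      exact ⟨_, graphZF_pair_mem hu⟩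

/-- If `f` is a set-function with domain `v` containing the graph of `h`, then `f`
equals that graph. -/
theorem graphZF_eq {v f : ZFSet.{u}} {h : Shrink v.toSet → ZFSet.{u}}
    (hf : IsZFFun f v)
    (hsub : ∀ u', ZFSet.pair ((equivShrink v.toSet).symm u').1 (h u') ∈ f) :
    graphZF v h = f := by
  apply ZFSet.ext
  intro z
  constructor
  · intro hz
    rw [graphZF, ZFSet.mem_range] at hz
    obtain ⟨u, rfl⟩ := hz
    exact hsub u
  · intro hz
    obtain ⟨a, b, rfl⟩ := hf.1 z hz
    have ha : a ∈ v := (hf.2.2 a).1 ⟨b, hz⟩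
    set u' := equivShrink v.toSet ⟨a, (ZFSet.mem_toSet _ _).2 ha⟩ with hu'
    have huu : ((equivShrink v.toSet).symm u').1 = a := by
      rw [hu', Equiv.symm_apply_apply]
    have h1 : ZFSet.pair a (h u') ∈ f := huu ▸ hsub u'
    have h2 : b = h u' := hf.2.1 a b _ hz h1
    rw [h2, ← huu]
    exact mem_graphZF v h u'

/-- A Lean-level W-type mirroring `W(X, F)`. -/
inductive WT (X F : ZFSet.{u}) : Type u
  | node : (x : Shrink X.toSet) →
      (Shrink (fval F ((equivShrink X.toSet).symm x).1).toSet → WT X F) → WT X F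

noncomputable def WT.toZF {X F : ZFSet.{u}} : WT X F → ZFSet.{u}
  | .node x f =>
    ZFSet.pair ((equivShrink X.toSet).symm x).1
      (graphZF (fval F ((equivShrink X.toSet).symm x).1) (fun u => (f u).toZF))

theorem WT_toZF_wclass (X F : ZFSet.{u}) (hF : IsZFFun F X) (t : WT X F) :
    WClass X F t.toZF := by
  induction t with
  | node x f ih =>
    intro W hW
    have haX : ((equivShrink X.toSet).symm x).1 ∈ X :=
      (ZFSet.mem_toSet _ _).1 ((equivShrink X.toSet).symm x).2
    obtain ⟨v0, hv0⟩ := (hF.2.2 _).2 haX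
    have haF := fval_mem hv0
    have := hW _ _ _ haX haF (graphZF_isZFFun _ (fun u => (f u).toZF)) ?_
    · exact this
    · intro u w hw
      obtain ⟨u1, -, h1b⟩ := graphZF_mem_elim hw
      rw [← h1b]
      exact ih u1 W hW

/-- For every set `X` and every set-function `F` with domain `X`, the class
`W(X, F)` is a set: there is a set `S` whose elements are exactly the members of
`W(X, F)`. -/
theorem WClass_isSet (X F : ZFSet) (hF : IsZFFun F X) :
    ∃ S : ZFSet, ∀ y : ZFSet, y ∈ S ↔ WClass X F y := by
  refine ⟨ZFSet.range (WT.toZF (X := X) (F := F)), fun y => ⟨?_, ?_⟩⟩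
  · rw [ZFSet.mem_range]
    rintro ⟨t, rfl⟩
    exact WT_toZF_wclass X F hF t
  · intro hy
    apply hy
    intro x v f hx hxv hf hvals
    rw [ZFSet.mem_range]
    set x' := equivShrink X.toSet ⟨x, (ZFSet.mem_toSet _ _).2 hx⟩ with hx'
    have hxx : (((equivShrink X.toSet).symm x').1 : ZFSet) = x := by
      rw [hx', Equiv.symm_apply_apply]
    have hfv : fval F ((equivShrink X.toSet).symm x').1 = v := by
      rw [hxx]
      exact hF.2.1 x _ v (fval_mem hxv) hxv
    have hex : ∀ u' : Shrink (fval F ((equivShrink X.toSet).symm x').1).toSet,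
        ∃ t : WT X F,
          ZFSet.pair ((equivShrink (fval F ((equivShrink X.toSet).symm x').1).toSet).symm u').1
            t.toZF ∈ f := by
      intro u'
      have hu : (((equivShrink (fval F ((equivShrink X.toSet).symm x').1).toSet).symm u').1
          : ZFSet) ∈ v := by
        rw [← hfv]
        exact (ZFSet.mem_toSet _ _).1
          ((equivShrink (fval F ((equivShrink X.toSet).symm x').1).toSet).symm u').2
      obtain ⟨w, hw⟩ := (hf.2.2 _).2 hu
      have hwS := hvals _ w hw
      rw [ZFSet.mem_range] at hwS
      obtain ⟨t, ht⟩ := hwS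
      exact ⟨t, ht ▸ hw⟩
    choose g hg using hex
    refine ⟨WT.node x' g, ?_⟩
    have hf' : IsZFFun f (fval F ((equivShrink X.toSet).symm x').1) := by
      rw [hfv]; exact hf
    show ZFSet.pair _ _ = _
    rw [graphZF_eq hf' hg, hxx]
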